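/- Let x : ℤ → {0,1} and define y_i = f156(x_{i−1}, x_i, x_{i+1}). Then for every n ≥ 2, the product ∏_{i=0}^{n} (1 − y_i) equals ∏_{i=−1}^{n} (1 − x_i). -/

import Mathlib

/-- Polynomial form of the local function of rule 156. -/
def f156 (a b c : ℤ) : ℤ := (1 - a) * b + a * b * c + a * (1 - b) * (1 - c)

lemma icc_insert (a b : ℤ) (h : a ≤ b + 1) :
    Finset.Icc a (b + 1) = insert (b + 1) (Finset.Icc a b) := by
  ext i; simp [Finset.mem_Icc, Finset.mem_insert]; omega

theorem stmt4 (x : ℤ → ℤ) (hx : ∀ i, x i = 0 ∨ x i = 1)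
    (y : ℤ → ℤ) (hy : ∀ i, y i = f156 (x (i - 1)) (x i) (x (i + 1)))
    (n : ℕ) (hn : 2 ≤ n) :
    ∏ i ∈ Finset.Icc (0 : ℤ) (n : ℤ), (1 - y i) =
      ∏ i ∈ Finset.Icc (-1 : ℤ) (n : ℤ), (1 - x i) := by
  induction n, hn using Nat.le_induction with
  | base =>
    have h1 : Finset.Icc (0 : ℤ) ((2 : ℕ) : ℤ) = {0, 1, 2} := by decide
    have h2 : Finset.Icc (-1 : ℤ) ((2 : ℕ) : ℤ) = {-1, 0, 1, 2} := by decide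
    have e0 := hy 0; have e1 := hy 1; have e2 := hy 2
    simp only [f156] at e0 e1 e2
    norm_num at e0 e1 e2
    rw [h1, h2]
    rw [Finset.prod_insert (by decide), Finset.prod_insert (by decide),
      Finset.prod_insert (by decide), Finset.prod_insert (by decide),
      Finset.prod_insert (by decide), Finset.prod_singleton, Finset.prod_singleton]
    rcases hx (-1) with h|h <;> rcases hx 0 with h0|h0 <;> rcases hx 1 with h1'|h1' <;>
      rcases hx 2 with h2'|h2' <;> rcases hx 3 with h3|h3 <;>
      simp [h, h0, h1', h2', h3] at e0 e1 e2 ⊢ <;> simp [e0, e1, e2]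
  | succ n hn ih =>
    have hc : ((n + 1 : ℕ) : ℤ) = (n : ℤ) + 1 := by push_cast; ring
    rw [hc, icc_insert 0 n (by positivity), icc_insert (-1) n (by omega),
      Finset.prod_insert (by simp only [Finset.mem_Icc, not_and_or, not_le]; omega), Finset.prod_insert (by simp only [Finset.mem_Icc, not_and_or, not_le]; omega), ih]
    by_cases hz : ∏ i ∈ Finset.Icc (-1 : ℤ) (n : ℤ), (1 - x i) = 0
    · rw [hz]; ring
    · have hxn : x (n : ℤ) = 0 := by
        rcases hx (n : ℤ) with h | h
        · exact h
        · exfalso; apply hz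
          apply Finset.prod_eq_zero (i := (n : ℤ)) (by simp [Finset.mem_Icc])
          rw [h]; ring
      have : y ((n : ℤ) + 1) = x ((n : ℤ) + 1) := by
        rw [hy]; simp [f156, hxn]
      rw [this]
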